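/- arXiv:1610.00571 — 3 statements merged into one kernel-verified Lean document; each statement's English description precedes it below -/
import Mathlib

section
/- For every V_0-selector g: α_1^g = {σ}, and for every non-critical index i ∈ [2,ℓ], α_i^g = α_{i−1}^g ∩ Ψ_i. -/
universe u v

/-- A leaf of a graph: a node with at most one neighbour. -/
def IsTreeLeaf {𝒱 : Type v} (T : SimpleGraph 𝒱) (x : 𝒱) : Prop :=
  (T.neighborSet x).Subsingleton

/-- `(T, B)` is a tree decomposition of the graph with vertex set `V` and edge
relation `E`. -/
def IsTreeDecomp {V : Type u} {𝒱 : Type v} (E : V → V → Prop) (T : SimpleGraph 𝒱)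
    (B : 𝒱 → Finset V) : Prop :=
  T.IsTree ∧ (∀ s t : V, E s t → ∃ x : 𝒱, s ∈ B x ∧ t ∈ B x) ∧
    ∀ s : V, (T.induce {x : 𝒱 | s ∈ B x}).Connected

/-- A nice (rooted) tree decomposition: every leaf has a singleton bag, every vertex
is the bag of some leaf, and along every tree edge one bag is obtained from the other
by adding exactly one vertex. -/
def IsNiceTD {V : Type u} {𝒱 : Type v} [DecidableEq V] (E : V → V → Prop)
    (T : SimpleGraph 𝒱) (B : 𝒱 → Finset V) (root : 𝒱) : Prop :=
  IsTreeDecomp E T B ∧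
  (∀ x : 𝒱, IsTreeLeaf T x → ∃ s : V, B x = {s}) ∧
  (∀ s : V, ∃ x : 𝒱, IsTreeLeaf T x ∧ B x = {s}) ∧
  ∀ x y : 𝒱, T.Adj x y →
    (∃ s : V, s ∉ B x ∧ B y = insert s (B x)) ∨ (∃ s : V, s ∉ B y ∧ B x = insert s (B y))

/-- A depth-first traversal `vs 1, …, vs ℓ` of the rooted tree `T`: it starts and ends
at the root, consecutive nodes are adjacent, and every oriented edge of `T` occurs
exactly once among consecutive pairs. -/
structure IsDFT {𝒱 : Type v} (T : SimpleGraph 𝒱) (root : 𝒱) (ℓ : ℕ) (vs : ℕ → 𝒱) :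
    Prop where
  one_le : 1 ≤ ℓ
  first : vs 1 = root
  last : vs ℓ = root
  adj : ∀ j : ℕ, 1 ≤ j → j < ℓ → T.Adj (vs j) (vs (j + 1))
  once : ∀ a b : 𝒱, T.Adj a b → ∃! j : ℕ, 1 ≤ j ∧ j < ℓ ∧ vs j = a ∧ vs (j + 1) = b

/-- `x` is an ancestor of `y` (w.r.t. `root`): `x` lies on the path from the root
to `y`.  (In a tree the path between two nodes is unique.) -/
def Anc {𝒱 : Type v} (T : SimpleGraph 𝒱) (root x y : 𝒱) : Prop :=
  ∀ p : T.Walk root y, p.IsPath → x ∈ p.support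

/-- `Θ_i`: the set of ancestors of `vs i`. -/
def Theta {𝒱 : Type v} (T : SimpleGraph 𝒱) (root : 𝒱) (vs : ℕ → 𝒱) (i : ℕ) : Set 𝒱 :=
  {x | Anc T root x (vs i)}

/-- `Θ_{≤ i} = ⋃_{1 ≤ j ≤ i} Θ_j`. -/
def ThetaLe {𝒱 : Type v} (T : SimpleGraph 𝒱) (root : 𝒱) (vs : ℕ → 𝒱) (i : ℕ) : Set 𝒱 :=
  {x | ∃ j : ℕ, 1 ≤ j ∧ j ≤ i ∧ x ∈ Theta T root vs j}

/-- `Ψ_i = ⋃_{x ∈ Θ_i} B x`. -/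
def Psi {V : Type u} {𝒱 : Type v} (T : SimpleGraph 𝒱) (root : 𝒱) (vs : ℕ → 𝒱)
    (B : 𝒱 → Finset V) (i : ℕ) : Set V :=
  {s | ∃ x ∈ Theta T root vs i, s ∈ B x}

/-- `Ψ_{≤ i} = ⋃_{1 ≤ j ≤ i} Ψ_j`. -/
def PsiLe {V : Type u} {𝒱 : Type v} (T : SimpleGraph 𝒱) (root : 𝒱) (vs : ℕ → 𝒱)
    (B : 𝒱 → Finset V) (i : ℕ) : Set V :=
  {s | ∃ j : ℕ, 1 ≤ j ∧ j ≤ i ∧ s ∈ Psi T root vs B j}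

/-- `x = n_i(w)`: `x` is the lowest ancestor of `w` belonging to `Θ_{≤ i}`. -/
def LowestAnc {𝒱 : Type v} (T : SimpleGraph 𝒱) (root : 𝒱) (vs : ℕ → 𝒱) (i : ℕ)
    (w x : 𝒱) : Prop :=
  Anc T root x w ∧ x ∈ ThetaLe T root vs i ∧
    ∀ y : 𝒱, Anc T root y w → y ∈ ThetaLe T root vs i → Anc T root y x

/-- `r = r(s)`: the node of `𝒯^s = {x | s ∈ B x}` closest to the root. -/
def IsBagRoot {V : Type u} {𝒱 : Type v} (T : SimpleGraph 𝒱) (root : 𝒱)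
    (B : 𝒱 → Finset V) (s : V) (r : 𝒱) : Prop :=
  s ∈ B r ∧ ∀ x : 𝒱, s ∈ B x → Anc T root r x

/-- `Ψ_{> i-1}(x) = {s ∈ Ψ_{> i-1} | n_i(s) = x}`, where `n_i(s) = n_i(r(s))`. -/
def PsiGtAt {V : Type u} {𝒱 : Type v} (T : SimpleGraph 𝒱) (root : 𝒱) (vs : ℕ → 𝒱)
    (B : 𝒱 → Finset V) (i : ℕ) (x : 𝒱) : Set V :=
  {s | s ∉ PsiLe T root vs B (i - 1) ∧
    ∃ r : 𝒱, IsBagRoot T root B s r ∧ LowestAnc T root vs i r x}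

/-- Possible values of a selector view: `?`, `⊤`, `⊥`, or an exit pair `(t, m)`. -/
inductive View (V : Type u) : Type u where
  | unk : View V
  | top : View V
  | bot : View V
  | exit : V → ℕ → View V

/-- The trace of the (partial) selector `f` from `s`: `iter f s n` is the `n`-th
vertex of the trace, if the trace is still defined at step `n`. -/
def iter {V : Type u} (f : V → Option V) (s : V) : ℕ → Option V
  | 0 => some s
  | n + 1 => (iter f s n).bind f

/-- `t` occurs infinitely often on the trace of `f` from `s`. -/
def infOcc {V : Type u} (f : V → Option V) (s t : V) : Prop :=
  ∀ N : ℕ, ∃ n : ℕ, N ≤ n ∧ iter f s n = some t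

/-- A parity game together with a tree decomposition and a depth-first traversal:
edge relation `E`, number of colors `C`, coloring `c`, set `V0` of vertices of
player `P₀` (`V1 = V0ᶜ`), tree `T` with bags `B`, depth-first traversal
`vs 1, …, vs len` and distinguished initial vertex `sigma`. -/
structure Setting (V : Type u) (𝒱 : Type v) where
  E : V → V → Prop
  C : ℕ
  c : V → ℕ
  V0 : Set V
  T : SimpleGraph 𝒱
  vs : ℕ → 𝒱
  len : ℕ
  sigma : V
  B : 𝒱 → Finset V

namespace Setting

variable {V : Type u} {𝒱 : Type v} (S : Setting V 𝒱)

/-- The root of the tree is the first node of the depth-first traversal. -/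
def root : 𝒱 := S.vs 1

/-- Standing assumptions: colors lie in `{1, …, C}`, `(T, B)` is a nice tree
decomposition of `(V, E)` rooted at `v₁` with bag `{σ}`, and `vs` is a
depth-first traversal of `T` of length `len`. -/
def Standing [DecidableEq V] : Prop :=
  (∀ s : V, 1 ≤ S.c s ∧ S.c s ≤ S.C) ∧
  IsNiceTD S.E S.T S.B S.root ∧
  IsDFT S.T S.root S.len S.vs ∧
  S.B S.root = {S.sigma}

def theta (i : ℕ) : Set 𝒱 := Theta S.T S.root S.vs i

def psi (i : ℕ) : Set V := Psi S.T S.root S.vs S.B i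

def psiLe (i : ℕ) : Set V := PsiLe S.T S.root S.vs S.B i

def psiGtAt (i : ℕ) (x : 𝒱) : Set V := PsiGtAt S.T S.root S.vs S.B i x

/-- The index `i` is critical: `Ψ_{>i} ⊊ Ψ_{>i-1}`. -/
def Crit (i : ℕ) : Prop := (S.psiLe i)ᶜ ⊂ (S.psiLe (i - 1))ᶜ

/-- `f` is a `W`-selector: a partial map with domain contained in `W` that follows
edges of the game. -/
def Sel (W : Set V) (f : V → Option V) : Prop :=
  ∀ s t : V, f s = some t → s ∈ W ∧ S.E s t

/-- The (maximal) trace of the `V`-selector `f` from `s` is winning for player `P₀`: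
either it is finite and its last vertex belongs to `V1 = V0ᶜ`, or it is infinite and
the maximal color occurring infinitely often along it is even. -/
def TraceWin (f : V → Option V) (s : V) : Prop :=
  (∃ (n : ℕ) (t : V), iter f s n = some t ∧ f t = none ∧ t ∉ S.V0) ∨
  ((∀ n : ℕ, iter f s n ≠ none) ∧
    ∃ m : ℕ, Even m ∧ (∃ t : V, infOcc f s t ∧ S.c t = m) ∧
      ∀ t : V, infOcc f s t → S.c t ≤ m)

/-- The selector view `f_i(x, s)` of the `V`-selector `f`: `S.SelView f i x s w`
means `f_i(x, s) = w`. -/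
def SelView (f : V → Option V) (i : ℕ) (x : 𝒱) (s : V) : View V → Prop := fun w =>
  match w with
  | View.unk =>
      (f s = none ∧ s ∉ S.psiGtAt i x) ∨ (∃ t : V, f s = some t ∧ t ∉ S.psiGtAt i x)
  | View.top =>
      (f s ≠ none ∨ s ∈ S.psiGtAt i x) ∧
      (∀ (n : ℕ) (t : V), 1 ≤ n → iter f s n = some t → t ∈ S.psiGtAt i x) ∧
      S.TraceWin f s
  | View.bot =>
      (f s ≠ none ∨ s ∈ S.psiGtAt i x) ∧
      (∀ (n : ℕ) (t : V), 1 ≤ n → iter f s n = some t → t ∈ S.psiGtAt i x) ∧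
      ¬ S.TraceWin f s
  | View.exit t m =>
      ∃ j : ℕ, 2 ≤ j ∧ iter f s j = some t ∧ t ∉ S.psiGtAt i x ∧
        (∀ (n : ℕ) (u : V), 1 ≤ n → n < j → iter f s n = some u → u ∈ S.psiGtAt i x) ∧
        (∃ (n : ℕ) (u : V), n < j ∧ iter f s n = some u ∧ S.c u = m) ∧
        (∀ (n : ℕ) (u : V), n < j → iter f s n = some u → S.c u ≤ m)

/-- The selector views `f_i(x)` and `g_i(x)` coincide (as functions on the bag of `x`). -/
def ViewEq (f g : V → Option V) (i : ℕ) (x : 𝒱) : Prop :=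
  ∀ s ∈ S.B x, ∀ w : View V, S.SelView f i x s w ↔ S.SelView g i x s w

/-- `f` is a `V`-selector extending the `V₀`-selector `g` (i.e. `g` is the
restriction of `f` to `V0`). -/
def Ext (f g : V → Option V) : Prop :=
  S.Sel Set.univ f ∧ (∀ s ∈ S.V0, g s = f s) ∧ ∀ s ∉ S.V0, g s = none

/-- The selector view `f_i(x)` of a `V`-selector, as a relation on the bag of `x`. -/
def viewOn (f : V → Option V) (i : ℕ) (x : 𝒱) : V → View V → Prop :=
  fun s w => s ∈ S.B x ∧ S.SelView f i x s w

/-- `ω_i^g(x) = { f_i(x) | f is an extension of g }`. -/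
def omega (g : V → Option V) (i : ℕ) (x : 𝒱) : Set (V → View V → Prop) :=
  {R | ∃ f : V → Option V, S.Ext f g ∧ R = S.viewOn f i x}

/-- The accessibility set `α_i^g`: vertices of `Ψ_i` reachable from `σ` along the
trace of some extension of `g`. -/
def alpha (g : V → Option V) (i : ℕ) : Set V :=
  {s | s ∈ S.psi i ∧ ∃ f : V → Option V, S.Ext f g ∧ ∃ k : ℕ, iter f S.sigma k = some s}

/-- The set `B(g)_{x,y} ⊆ {⊥, ⊤}` (with `false` for `⊥` and `true` for `⊤`). -/
def Bsel (g : V → Option V) (x y : V) : Set Bool :=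
  {b | (b = false ∧ (¬ S.E x y ∨ (x ∈ S.V0 ∧ g x = none) ∨
          (∃ z : V, g x = some z ∧ z ≠ y) ∨ (S.E x y ∧ x ∉ S.V0))) ∨
       (b = true ∧ (g x = some y ∨ (S.E x y ∧ x ∉ S.V0)))}

end Setting

section AuxTree

open SimpleGraph

variable {𝒱 : Type v} {T : SimpleGraph 𝒱} {root : 𝒱}

private lemma tree_path_unique (hT : T.IsTree) {a b : 𝒱} (p q : T.Walk a b)
    (hp : p.IsPath) (hq : q.IsPath) : p = q := by
  obtain ⟨r, -, hu⟩ := hT.existsUnique_path a b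
  rw [hu p hp, hu q hq]

private lemma exists_path (hT : T.IsTree) (a b : 𝒱) : ∃ p : T.Walk a b, p.IsPath :=
  (hT.isConnected.preconnected a b).elim_path fun p => ⟨p.1, p.2⟩

private lemma concat_isPath' {a b c : 𝒱} {p : T.Walk a b} (h : T.Adj b c) (hp : p.IsPath)
    (hc : c ∉ p.support) : (p.concat h).IsPath := by
  rw [← Walk.isPath_reverse_iff, Walk.reverse_concat, Walk.cons_isPath_iff]
  refine ⟨hp.reverse, ?_⟩
  rwa [Walk.support_reverse, List.mem_reverse]

private lemma anc_of_mem (hT : T.IsTree) {x y : 𝒱} {P : T.Walk root y} (hP : P.IsPath)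
    (hx : x ∈ P.support) : Anc T root x y := fun q hq => by
  rw [tree_path_unique hT q P hq hP]; exact hx

private lemma anc_self (y : 𝒱) : Anc T root y y := fun p _ => p.end_mem_support

private lemma anc_root (y : 𝒱) : Anc T root root y := fun p _ => p.start_mem_support

private lemma anc_root_iff (x : 𝒱) : Anc T root x root ↔ x = root := by
  constructor
  · intro h
    have h2 := h Walk.nil Walk.IsPath.nil
    simpa using h2
  · rintro rfl; exact anc_root _

private lemma walk_of_induce_connected {A : Set 𝒱} (h : (T.induce A).Connected)
    {a b : 𝒱} (ha : a ∈ A) (hb : b ∈ A) :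
    ∃ w : T.Walk a b, ∀ u ∈ w.support, u ∈ A := by
  obtain ⟨w⟩ := h.preconnected ⟨a, ha⟩ ⟨b, hb⟩
  refine ⟨w.map (Embedding.induce A).toHom, ?_⟩
  intro u hu
  have hu : u ∈ (w.map (Embedding.induce A).toHom).support := hu
  rw [Walk.support_map] at hu
  obtain ⟨⟨u', hu'⟩, -, rfl⟩ := List.mem_map.1 hu
  exact hu'

private lemma ivt (I : ℕ → Prop) (a : ℕ) : ∀ b, a ≤ b → ¬ I a → I b →
    ∃ m, a ≤ m ∧ m < b ∧ ¬ I m ∧ I (m + 1) := by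
  intro b
  induction b with
  | zero =>
    intro hab ha hb
    have h0 : a = 0 := by omega
    exact absurd hb (h0 ▸ ha)
  | succ c ih =>
    intro hab ha hb
    rcases Nat.lt_or_ge a (c + 1) with hlt | hge
    · by_cases hc : I c
      · obtain ⟨m, h1, h2, h3, h4⟩ := ih (by omega) ha hc
        exact ⟨m, h1, by omega, h3, h4⟩
      · exact ⟨c, by omega, by omega, hc, hb⟩
    · have h0 : a = c + 1 := by omega
      exact absurd hb (h0 ▸ ha)

private lemma boundary [DecidableEq 𝒱] (hT : T.IsTree) {a b : 𝒱} {p : T.Walk root a}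
    (hp : p.IsPath) (hb : b ∉ p.support) (hadj : T.Adj a b)
    {u w : 𝒱} (hwu : T.Adj w u) (hu : Anc T root b u) (hw : ¬ Anc T root b w) :
    u = b ∧ w = a := by
  rw [Anc] at hw; push_neg at hw
  obtain ⟨Rw, hRw, hbRw⟩ := hw
  by_cases huR : u ∈ Rw.support
  · exact absurd (Walk.support_takeUntil_subset _ huR (hu _ (hRw.takeUntil huR))) hbRw
  · have hck : (Rw.concat hwu).IsPath := concat_isPath' hwu hRw huR
    have hbmem := hu _ hck
    rw [Walk.support_concat, List.mem_append, List.mem_singleton] at hbmem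
    rcases hbmem with h | h
    · exact absurd h hbRw
    · subst h
      refine ⟨rfl, ?_⟩
      have heq : Rw.concat hwu = p.concat hadj :=
        tree_path_unique hT _ _ hck (concat_isPath' hadj hp hb)
      have hsupp : Rw.support = p.support := by
        have h2 := congrArg Walk.support heq
        rw [Walk.support_concat, Walk.support_concat] at h2
        exact List.append_cancel_right h2
      have h1 : Rw.support.getLast? = some w := by
        rw [List.getLast?_eq_getLast Rw.support_ne_nil, Rw.getLast_support]
      have h2 : p.support.getLast? = some a := by
        rw [List.getLast?_eq_getLast p.support_ne_nil, p.getLast_support]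
      rw [hsupp, h2] at h1
      exact (Option.some_inj.1 h1).symm

private lemma psi_mono_of_noncrit {V : Type u} {𝒱 : Type v} [DecidableEq V] [DecidableEq 𝒱]
    {T : SimpleGraph 𝒱} {root : 𝒱} {vs : ℕ → 𝒱} {B : 𝒱 → Finset V} {ℓ : ℕ}
    (hT : T.IsTree)
    (hconn : ∀ s : V, (T.induce {x : 𝒱 | s ∈ B x}).Connected)
    (hDFT : IsDFT T root ℓ vs)
    {i : ℕ} (h2 : 2 ≤ i) (hlen : i ≤ ℓ)
    (hsub : Psi T root vs B i ⊆ PsiLe T root vs B (i - 1)) :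
    Psi T root vs B i ⊆ Psi T root vs B (i - 1) := by
  intro s hs
  obtain ⟨x, hx, hsx⟩ := hs
  obtain ⟨p, hp⟩ := exists_path hT root (vs (i - 1))
  have hadj : T.Adj (vs (i - 1)) (vs i) := by
    have h := hDFT.adj (i - 1) (by omega) (by omega)
    rwa [show i - 1 + 1 = i by omega] at h
  by_cases hvi : vs i ∈ p.support
  · refine ⟨x, ?_, hsx⟩
    have hq : (p.takeUntil (vs i) hvi).IsPath := hp.takeUntil hvi
    exact anc_of_mem hT hp (Walk.support_takeUntil_subset p hvi (hx _ hq))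
  · have hq : (p.concat hadj).IsPath := concat_isPath' hadj hp hvi
    have hx' := hx _ hq
    rw [Walk.support_concat, List.mem_append, List.mem_singleton] at hx'
    rcases hx' with hx' | rfl
    · exact ⟨x, anc_of_mem hT hp hx', hsx⟩
    by_cases hs1 : s ∈ B (vs (i - 1))
    · exact ⟨vs (i - 1), anc_self _, hs1⟩
    exfalso
    obtain ⟨j, hj1, hji, z, hz, hsz⟩ := hsub ⟨vs i, anc_self _, hsx⟩
    obtain ⟨Pj, hPj⟩ := exists_path hT root (vs j)
    have hzP : z ∈ Pj.support := hz Pj hPj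
    have hR : (Pj.takeUntil z hzP).IsPath := hPj.takeUntil hzP
    set R := Pj.takeUntil z hzP with hRdef
    by_cases hviR : vs i ∈ R.support
    · have hIj : Anc T root (vs i) (vs j) :=
        anc_of_mem hT hPj (Walk.support_takeUntil_subset Pj hzP hviR)
      have hI1 : ¬ Anc T root (vs i) (vs 1) := by
        intro h
        rw [hDFT.first, anc_root_iff] at h
        exact hvi (h ▸ p.start_mem_support)
      obtain ⟨m, hm1, hmj, hmI, hmI1⟩ :=
        ivt (fun m => Anc T root (vs i) (vs m)) 1 j hj1 hI1 hIj
      have hadjm : T.Adj (vs m) (vs (m + 1)) := hDFT.adj m hm1 (by omega)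
      have hbd := boundary hT hp hvi hadj hadjm hmI1 hmI
      obtain ⟨t, ht, hun⟩ := hDFT.once (vs (i - 1)) (vs i) hadj
      have e1 : m = t := hun m ⟨hm1, by omega, hbd.2, hbd.1⟩
      have e2 : i - 1 = t := hun (i - 1) ⟨by omega, by omega, rfl,
        by rw [show i - 1 + 1 = i by omega]⟩
      omega
    · obtain ⟨w', hw'⟩ := walk_of_induce_connected (hconn s) hsz hsx
      have hbw' : vs (i - 1) ∉ w'.support := fun h => hs1 (hw' _ h)
      have hbyp : vs (i - 1) ∈ (R.append w').support := by
        have heq : (R.append w').bypass = p.concat hadj :=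
          tree_path_unique hT _ _ ((R.append w').bypass_isPath) hq
        have hmem : vs (i - 1) ∈ (R.append w').bypass.support := by
          rw [heq, Walk.support_concat, List.mem_append]
          exact Or.inl p.end_mem_support
        exact Walk.support_bypass_subset _ hmem
      rw [Walk.mem_support_append_iff] at hbyp
      rcases hbyp with hmem | hmem
      · have hb1 : w'.bypass.IsPath := w'.bypass_isPath
        have hbs : vs (i - 1) ∉ w'.bypass.support :=
          fun h => hbw' (Walk.support_bypass_subset _ h)
        have hc : (w'.bypass.concat hadj.symm).IsPath := concat_isPath' hadj.symm hb1 hbs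
        have hd : ((R.dropUntil (vs (i - 1)) hmem).reverse).IsPath := (hR.dropUntil hmem).reverse
        have heq2 : w'.bypass.concat hadj.symm = (R.dropUntil (vs (i - 1)) hmem).reverse :=
          tree_path_unique hT _ _ hc hd
        apply hviR
        have hvmem : vs i ∈ (w'.bypass.concat hadj.symm).support := by
          rw [Walk.support_concat, List.mem_append]
          exact Or.inl w'.bypass.end_mem_support
        rw [heq2, Walk.support_reverse, List.mem_reverse] at hvmem
        exact Walk.support_dropUntil_subset R hmem hvmem
      · exact hs1 (hw' _ hmem)

end AuxTree

/-- `α₁^g = {σ}`, and for every non-critical index `i ∈ [2, ℓ]`,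
`α_i^g = α_{i-1}^g ∩ Ψ_i`. -/
theorem alpha_first_and_noncritical {V : Type u} {𝒱 : Type v}
    [Fintype V] [DecidableEq V] [Fintype 𝒱]
    (S : Setting V 𝒱) (hS : S.Standing) (hV : 2 ≤ Fintype.card V)
    (g : V → Option V) (hg : S.Sel S.V0 g) :
    S.alpha g 1 = {S.sigma} ∧
    ∀ i : ℕ, 2 ≤ i → i ≤ S.len → ¬ S.Crit i →
      S.alpha g i = S.alpha g (i - 1) ∩ S.psi i := by
  classical
  obtain ⟨hcol, hnice, hDFT, hbag⟩ := hS
  have hT : S.T.IsTree := hnice.1.1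
  have hconn := hnice.1.2.2
  constructor
  · ext s
    simp only [Set.mem_singleton_iff]
    constructor
    · rintro ⟨⟨x, hx, hsx⟩, -⟩
      have hx' : x = S.root := by
        have h := hx SimpleGraph.Walk.nil SimpleGraph.Walk.IsPath.nil
        exact List.mem_singleton.1 h
      rw [hx', hbag] at hsx
      simpa using hsx
    · rintro rfl
      refine ⟨⟨S.root, anc_root _, by rw [hbag]; exact Finset.mem_singleton_self _⟩,
        g, ⟨fun s t hst => ⟨Set.mem_univ s, (hg s t hst).2⟩, fun s _ => rfl,
          fun s hs => ?_⟩, 0, rfl⟩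
      cases hgs : g s with
      | none => rfl
      | some t => exact absurd (hg s t hgs).1 hs
  · intro i h2 hlen hcrit
    have hmono : S.psiLe (i - 1) ⊆ S.psiLe i := by
      rintro s ⟨j, hj1, hji, hmem⟩
      exact ⟨j, hj1, by omega, hmem⟩
    have hle : S.psiLe i ⊆ S.psiLe (i - 1) := by
      by_contra h
      apply hcrit
      show (S.psiLe i)ᶜ ⊂ (S.psiLe (i - 1))ᶜ
      rw [Set.ssubset_def]
      exact ⟨Set.compl_subset_compl.2 hmono, fun hc => h (Set.compl_subset_compl.1 hc)⟩
    have hsub : S.psi i ⊆ PsiLe S.T S.root S.vs S.B (i - 1) := fun s hs =>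
      hle ⟨i, by omega, le_refl i, hs⟩
    have hkey : S.psi i ⊆ S.psi (i - 1) :=
      psi_mono_of_noncrit hT hconn hDFT h2 hlen hsub
    ext s
    constructor
    · rintro ⟨hp, hr⟩
      exact ⟨⟨hkey hp, hr⟩, hp⟩
    · rintro ⟨⟨hp, hr⟩, hp'⟩
      exact ⟨hp', hr⟩
end

section
/- Let V be a set and E a binary relation on V that is acyclic, i.e., no x ∈ V satisfies x E⁺ x where E⁺ is the transitive closure of E. Let (s,t) be a pair with s E t, and let E′ be the relation obtained from E by removing the pair (s,t). Writing Reach(a,b) for the statement that b lies in the reflexive–transitive closure of E from a, and Reach′(a,b) for the same with E′, the following holds for all u,v ∈ V: Reach′(u,v) if and only if Reach(u,v) and, in addition, at least one of the following holds: (1) Reach(v,s); (2) Reach(u,s) fails; (3) there exist x,y ∈ V with x E y, (x,y) ≠ (s,t), Reach(u,x), Reach(y,v), Reach(x,s), and not Reach(y,s). -/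
universe u

section Aux

variable {V : Type u} {E : V → V → Prop} {s t : V}

private lemma reach_del_mono {a b : V}
    (h : Relation.ReflTransGen (fun a b => E a b ∧ ¬ (a = s ∧ b = t)) a b) :
    Relation.ReflTransGen E a b :=
  Relation.ReflTransGen.mono (fun _ _ h => h.1) _ _ h

/-- If `v` is reachable from `u` and `s` reachable from `v`, the edge `(s,t)` is not
needed on a path from `u` to `v` (acyclicity). -/
private lemma reach_del_of_reach_to_s
    (hacyc : ∀ x : V, ¬ Relation.TransGen E x x) (hst : E s t) :
    ∀ {u v : V}, Relation.ReflTransGen E u v → Relation.ReflTransGen E v s →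
      Relation.ReflTransGen (fun a b => E a b ∧ ¬ (a = s ∧ b = t)) u v := by
  intro u v h
  induction h using Relation.ReflTransGen.head_induction_on with
  | refl => intro _; exact Relation.ReflTransGen.refl
  | head hab hbv ih =>
    intro hvs
    rename_i a b
    refine Relation.ReflTransGen.head ⟨hab, ?_⟩ (ih hvs)
    rintro ⟨rfl, rfl⟩
    exact hacyc _ (Relation.TransGen.head' hst (hbv.trans hvs))

private lemma reach_del_of_not_reach_s :
    ∀ {u v : V}, Relation.ReflTransGen E u v → ¬ Relation.ReflTransGen E u s →
      Relation.ReflTransGen (fun a b => E a b ∧ ¬ (a = s ∧ b = t)) u v := by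
  intro u v h
  induction h using Relation.ReflTransGen.head_induction_on with
  | refl => intro _; exact Relation.ReflTransGen.refl
  | head hab hbv ih =>
    intro hus
    rename_i a b
    have hbs : ¬ Relation.ReflTransGen E b s := fun hb => hus (hb.head hab)
    refine Relation.ReflTransGen.head ⟨hab, ?_⟩ (ih hbs)
    rintro ⟨rfl, rfl⟩
    exact hus Relation.ReflTransGen.refl

private lemma reach_del_forward :
    ∀ {u v : V},
      Relation.ReflTransGen (fun a b => E a b ∧ ¬ (a = s ∧ b = t)) u v →
      Relation.ReflTransGen E u s → ¬ Relation.ReflTransGen E v s →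
      ∃ x y : V, E x y ∧ ¬ (x = s ∧ y = t) ∧ Relation.ReflTransGen E u x ∧
        Relation.ReflTransGen E y v ∧ Relation.ReflTransGen E x s ∧
        ¬ Relation.ReflTransGen E y s := by
  intro u v h
  induction h using Relation.ReflTransGen.head_induction_on with
  | refl => intro hus hvs; exact absurd hus hvs
  | head hab hbv ih =>
    intro hus hvs
    rename_i a b
    by_cases hbs : Relation.ReflTransGen E b s
    · obtain ⟨x, y, hxy, hne, hbx, hyv, hxs, hys⟩ := ih hbs hvs
      exact ⟨x, y, hxy, hne, hbx.head hab.1, hyv, hxs, hys⟩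
    · exact ⟨a, b, hab.1, hab.2, Relation.ReflTransGen.refl,
        reach_del_mono hbv, hus, hbs⟩

end Aux

/-- Reachability after deleting the edge `(s, t)` from an acyclic
relation `E`: `v` is reachable from `u` in `E ∖ {(s,t)}` iff `v` is reachable from
`u` in `E` and moreover (1) `s` is reachable from `v`, or (2) `s` is not reachable
from `u`, or (3) there is an edge `(x, y) ≠ (s, t)` with `x` reachable from `u`,
`v` reachable from `y`, `s` reachable from `x` and `s` not reachable from `y`. -/
theorem reach_delete_edge {V : Type u} (E : V → V → Prop)
    (hacyc : ∀ x : V, ¬ Relation.TransGen E x x)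
    (s t : V) (hst : E s t) (u v : V) :
    Relation.ReflTransGen (fun a b => E a b ∧ ¬ (a = s ∧ b = t)) u v ↔
      (Relation.ReflTransGen E u v ∧
        (Relation.ReflTransGen E v s ∨ ¬ Relation.ReflTransGen E u s ∨
          ∃ x y : V, E x y ∧ ¬ (x = s ∧ y = t) ∧ Relation.ReflTransGen E u x ∧
            Relation.ReflTransGen E y v ∧ Relation.ReflTransGen E x s ∧
            ¬ Relation.ReflTransGen E y s)) := by
  constructor
  · intro h
    refine ⟨reach_del_mono h, ?_⟩
    by_cases hvs : Relation.ReflTransGen E v s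
    · exact Or.inl hvs
    by_cases hus : Relation.ReflTransGen E u s
    · exact Or.inr (Or.inr (reach_del_forward h hus hvs))
    · exact Or.inr (Or.inl hus)
  · rintro ⟨huv, hvs | hus | ⟨x, y, hxy, hne, hux, hyv, hxs, hys⟩⟩
    · exact reach_del_of_reach_to_s hacyc hst huv hvs
    · exact reach_del_of_not_reach_s huv hus
    · exact ((reach_del_of_reach_to_s hacyc hst hux hxs).tail ⟨hxy, hne⟩).trans
        (reach_del_of_not_reach_s hyv hys)
end

section
/- Let G=(V,E,c,V_0,V_1) be a parity game, let W ⊆ V, and for each σ ∈ W let f^σ be a V_0-selector that is winning for P_0 from σ, and let V^σ be the set of vertices occurring on some finite path starting at σ and compatible with f^σ. Fix a linear order ≤ on V. Define a partial map g as follows: for s ∈ ∪_{σ∈W} V^σ, let τ(s) be the ≤-least σ ∈ W with s ∈ V^σ, and set g(s) = f^{τ(s)}(s) if s ∈ dom(f^{τ(s)}), leaving g undefined at s otherwise; g is undefined outside ∪_{σ∈W} V^σ. Then g is a V_0-selector that is winning for P_0 from every σ ∈ W. -/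
universe u

/-- `p` is a (nonempty) finite path of the graph with edge relation `E`. -/
def FinPath {V : Type u} (E : V → V → Prop) (p : List V) : Prop :=
  p ≠ [] ∧ p.Chain' E

/-- The finite path `p` is compatible with the selector `f`: whenever a vertex of
`p` lies in the domain of `f`, the next vertex of `p` is prescribed by `f`. -/
def FinCompat {V : Type u} (f : V → Option V) (p : List V) : Prop :=
  ∀ j : ℕ, j + 1 < p.length → ∀ u : V, p[j]? = some u → ∀ t : V, f u = some t →
    p[j+1]? = some t

/-- The infinite play `ρ` is winning for `P₀`: the maximal color occurring
infinitely often along it is even. -/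
def InfWinning {V : Type u} (c : V → ℕ) (ρ : ℕ → V) : Prop :=
  ∃ m : ℕ, Even m ∧ (∀ N : ℕ, ∃ n : ℕ, N ≤ n ∧ c (ρ n) = m) ∧
    ∀ m' : ℕ, (∀ N : ℕ, ∃ n : ℕ, N ≤ n ∧ c (ρ n) = m') → m' ≤ m

/-- The selector `f` is winning for player `P₀` from `s0`: every maximal path
starting at `s0` and compatible with `f` is winning for `P₀` (a finite maximal
compatible path is winning iff its last vertex lies in `V1 = V0ᶜ`). -/
def SelWinFrom {V : Type u} (E : V → V → Prop) (V0 : Set V) (c : V → ℕ)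
    (f : V → Option V) (s0 : V) : Prop :=
  (∀ p : List V, FinPath E p → p.head? = some s0 → FinCompat f p →
    (¬ ∃ t : V, FinPath E (p ++ [t]) ∧ FinCompat f (p ++ [t])) →
    ∃ u : V, p.getLast? = some u ∧ u ∉ V0) ∧
  ∀ ρ : ℕ → V, ρ 0 = s0 → (∀ n : ℕ, E (ρ n) (ρ (n + 1))) →
    (∀ (n : ℕ) (t : V), f (ρ n) = some t → ρ (n + 1) = t) → InfWinning c ρ

namespace UWSaux

variable {V : Type u}

lemma chain'_getElem {E : V → V → Prop} {p : List V} (h : p.Chain' E)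
    {j : ℕ} (hj : j + 1 < p.length) : E p[j] p[j+1] := by
  exact List.isChain_iff_getElem.mp h j hj

lemma finCompat_take {f : V → Option V} {p : List V} (h : FinCompat f p) (n : ℕ) :
    FinCompat f (p.take n) := by
  intro j hj u hu t ht
  rw [List.length_take] at hj
  rw [List.getElem?_take, if_pos (by omega : j < n)] at hu
  rw [List.getElem?_take, if_pos (by omega : j + 1 < n)]
  exact h j (by omega) u hu t ht

lemma extend_one {E : V → V → Prop} {f : V → Option V} {σ s t : V} {q : List V}
    (hq : FinPath E q) (hh : q.head? = some σ) (hcq : FinCompat f q)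
    (hl : q.getLast? = some s) (het : E s t) (hft : ∀ t', f s = some t' → t' = t) :
    FinPath E (q ++ [t]) ∧ (q ++ [t]).head? = some σ ∧ FinCompat f (q ++ [t]) ∧
      (q ++ [t]).getLast? = some t := by
  have hqlen : 0 < q.length := List.length_pos_iff.mpr hq.1
  refine ⟨⟨by simp, ?_⟩, ?_, ?_, List.getLast?_concat⟩
  · refine List.isChain_append.mpr ?_
    refine ⟨hq.2, List.isChain_singleton t, ?_⟩
    intro x hx y hy
    simp only [List.head?_cons, Option.mem_def, Option.some.injEq] at hy
    rw [Option.mem_def, hl] at hx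
    rw [← hy, ← Option.some.inj hx]
    exact het
  · rw [List.head?_eq_getElem?, List.getElem?_append_left hqlen,
      ← List.head?_eq_getElem?]
    exact hh
  · intro j hj u hu t' ht'
    simp only [List.length_append, List.length_singleton] at hj
    rcases Nat.lt_or_ge (j+1) q.length with h1 | h1
    · rw [List.getElem?_append_left (by omega)] at hu
      rw [List.getElem?_append_left h1]
      exact hcq j h1 u hu t' ht'
    · have hj1 : j + 1 = q.length := by omega
      have hqj : q[j]? = some u := by
        rw [List.getElem?_append_left (by omega)] at hu; exact hu
      have hus : u = s := by
        rw [List.getLast?_eq_getElem?] at hl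
        have hje : q.length - 1 = j := by omega
        rw [hje, hqj] at hl
        exact Option.some.inj hl
      have htt : t' = t := hft t' (hus ▸ ht')
      rw [hj1, List.getElem?_concat_length, htt]

lemma exists_path_ending {E : V → V → Prop} {f : V → Option V} {σ s : V}
    {p : List V} (hp : FinPath E p) (hh : p.head? = some σ) (hc : FinCompat f p)
    (hs : s ∈ p) :
    ∃ q : List V, FinPath E q ∧ q.head? = some σ ∧ FinCompat f q ∧
      q.getLast? = some s := by
  obtain ⟨i, hi, rfl⟩ := List.mem_iff_getElem.mp hs
  have hlt : (p.take (i+1)).length = i + 1 := by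
    rw [List.length_take]; omega
  refine ⟨p.take (i+1), ⟨?_, hp.2.prefix (List.take_prefix _ _)⟩, ?_,
    finCompat_take hc _, ?_⟩
  · intro h; rw [h] at hlt; simp at hlt
  · rw [List.head?_eq_getElem?, List.getElem?_take, if_pos (by omega : 0 < i + 1),
      ← List.head?_eq_getElem?]
    exact hh
  · rw [List.getLast?_eq_getElem?, hlt, List.getElem?_take,
      if_pos (by omega : i + 1 - 1 < i + 1)]
    have : i + 1 - 1 = i := by omega
    rw [this, List.getElem?_eq_getElem hi]

lemma infOcc_congr {c : V → ℕ} {ρ₁ ρ₂ : ℕ → V} {K L : ℕ}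
    (h : ∀ n, ρ₁ (n + K) = ρ₂ (n + L)) (m : ℕ)
    (hm : ∀ N, ∃ n, N ≤ n ∧ c (ρ₁ n) = m) : ∀ N, ∃ n, N ≤ n ∧ c (ρ₂ n) = m := by
  intro N
  obtain ⟨n, hn, hcn⟩ := hm (N + K)
  refine ⟨n - K + L, by omega, ?_⟩
  rw [← h (n - K)]
  have he : n - K + K = n := by omega
  rw [he]; exact hcn

lemma infWinning_congr {c : V → ℕ} {ρ₁ ρ₂ : ℕ → V} {K L : ℕ}
    (h : ∀ n, ρ₁ (n + K) = ρ₂ (n + L)) (hw : InfWinning c ρ₁) : InfWinning c ρ₂ := by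
  obtain ⟨m, hme, hocc, hmax⟩ := hw
  exact ⟨m, hme, infOcc_congr h m hocc,
    fun m' hm' => hmax m' (infOcc_congr (fun n => (h n).symm) m' hm')⟩

end UWSaux

/-- Gluing non-uniform winning selectors `f^σ` (for `σ` in a set
`W` of winning vertices) along the ≤-least index `τ(s)` with `s ∈ V^{τ(s)}` yields a
single `V₀`-selector `g` that is winning for `P₀` from every `σ ∈ W`. -/
theorem uniform_winning_selector {V : Type u} [Fintype V] [LinearOrder V]
    (E : V → V → Prop) (V0 : Set V) (c : V → ℕ) (C : ℕ)
    (hc : ∀ s : V, 1 ≤ c s ∧ c s ≤ C)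
    (W : Set V) (fsel : V → V → Option V)
    (hsel : ∀ σ ∈ W, (∀ s t : V, fsel σ s = some t → s ∈ V0 ∧ E s t) ∧
      SelWinFrom E V0 c (fsel σ) σ)
    (Vset : V → Set V)
    (hVset : ∀ σ ∈ W, Vset σ = {z | ∃ p : List V, FinPath E p ∧ p.head? = some σ ∧
      FinCompat (fsel σ) p ∧ z ∈ p})
    (τ : V → V)
    (hτ : ∀ s : V, (∃ σ ∈ W, s ∈ Vset σ) →
      τ s ∈ W ∧ s ∈ Vset (τ s) ∧ ∀ σ ∈ W, s ∈ Vset σ → τ s ≤ σ)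
    (g : V → Option V)
    (hg1 : ∀ s : V, (∃ σ ∈ W, s ∈ Vset σ) → g s = fsel (τ s) s)
    (hg2 : ∀ s : V, ¬ (∃ σ ∈ W, s ∈ Vset σ) → g s = none) :
    (∀ s t : V, g s = some t → s ∈ V0 ∧ E s t) ∧
      ∀ σ ∈ W, SelWinFrom E V0 c g σ := by
  classical
  -- every σ ∈ W lies in its own Vset
  have hσself : ∀ σ ∈ W, σ ∈ Vset σ := by
    intro σ hσ
    rw [hVset σ hσ]
    refine ⟨[σ], ⟨by simp, List.isChain_singleton σ⟩, by simp, ?_, by simp⟩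
    intro j hj; simp at hj
  -- key step: Good is preserved along g-compatible edges
  have hstep : ∀ s t : V, (∃ σ ∈ W, s ∈ Vset σ) → E s t →
      (∀ t', g s = some t' → t' = t) → t ∈ Vset (τ s) := by
    intro s t hG hE hcomp
    obtain ⟨hτW, hsτ, -⟩ := hτ s hG
    rw [hVset (τ s) hτW] at hsτ ⊢
    obtain ⟨p, hp, hh, hcp, hsp⟩ := hsτ
    obtain ⟨q, hq, hqh, hqc, hql⟩ := UWSaux.exists_path_ending hp hh hcp hsp
    have hft : ∀ t', fsel (τ s) s = some t' → t' = t := by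
      intro t' ht'
      exact hcomp t' (by rw [hg1 s hG]; exact ht')
    obtain ⟨h1, h2, h3, -⟩ := UWSaux.extend_one hq hqh hqc hql hE hft
    exact ⟨q ++ [t], h1, h2, h3, by simp⟩
  constructor
  · intro s t hst
    have hG : ∃ σ ∈ W, s ∈ Vset σ := by
      by_contra h
      rw [hg2 s h] at hst
      exact absurd hst (by simp)
    rw [hg1 s hG] at hst
    exact (hsel (τ s) (hτ s hG).1).1 s t hst
  intro σ hσW
  constructor
  · -- finite maximal paths
    intro p hp hh hcp hmax
    have hplen : 0 < p.length := List.length_pos_iff.mpr hp.1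
    have hGoodAll : ∀ j (hj : j < p.length), ∃ σ' ∈ W, p[j] ∈ Vset σ' := by
      intro j
      induction j with
      | zero =>
        intro hj
        have h0 : p[0] = σ := by
          rw [List.head?_eq_getElem?, List.getElem?_eq_getElem hj] at hh
          exact Option.some.inj hh
        rw [h0]
        exact ⟨σ, hσW, hσself σ hσW⟩
      | succ j ih =>
        intro hj
        have hj' : j < p.length := by omega
        have hG := ih hj'
        have hE := UWSaux.chain'_getElem hp.2 (by omega : j + 1 < p.length)
        have hcomp : ∀ t', g p[j] = some t' → t' = p[j+1] := by
          intro t' ht'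
          have := hcp j (by omega) p[j] (List.getElem?_eq_getElem hj') t' ht'
          rw [List.getElem?_eq_getElem hj] at this
          exact (Option.some.inj this).symm
        exact ⟨τ p[j], (hτ _ hG).1, hstep _ _ hG hE hcomp⟩
    set n := p.length - 1 with hn
    have hnlt : n < p.length := by omega
    set u := p[n] with hu
    have hlast : p.getLast? = some u := by
      rw [List.getLast?_eq_getElem?, List.getElem?_eq_getElem hnlt]
    have hGu : ∃ σ' ∈ W, u ∈ Vset σ' := hGoodAll n hnlt
    obtain ⟨hτW, huτ, -⟩ := hτ u hGu
    have hgu : g u = fsel (τ u) u := hg1 u hGu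
    rw [hVset (τ u) hτW] at huτ
    obtain ⟨p', hp', hh', hcp', hup'⟩ := huτ
    obtain ⟨q, hq, hqh, hqc, hql⟩ := UWSaux.exists_path_ending hp' hh' hcp' hup'
    have hqmax : ¬ ∃ t, FinPath E (q ++ [t]) ∧ FinCompat (fsel (τ u)) (q ++ [t]) := by
      rintro ⟨t, hqt, hqtc⟩
      apply hmax
      have hqlen : 0 < q.length := List.length_pos_iff.mpr hq.1
      have hEut : E u t := by
        obtain ⟨-, -, h3⟩ := List.isChain_append.mp hqt.2
        exact h3 u (by rw [Option.mem_def, hql]) t (by simp)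
      have hjunct : ∀ t', fsel (τ u) u = some t' → t' = t := by
        intro t' ht'
        have hk : q.length - 1 + 1 < (q ++ [t]).length := by
          simp; omega
        have hqj : q[q.length - 1]? = some u := by
          rw [← List.getLast?_eq_getElem?]; exact hql
        have := hqtc (q.length - 1) hk u
          (by rw [List.getElem?_append_left (by omega)]; exact hqj) t' ht'
        have he : q.length - 1 + 1 = q.length := by omega
        rw [he, List.getElem?_concat_length] at this
        exact (Option.some.inj this).symm
      have hgcomp : ∀ t', g u = some t' → t' = t := by
        intro t' ht'
        exact hjunct t' (by rw [← hgu]; exact ht')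
      obtain ⟨h1, -, -, -⟩ := UWSaux.extend_one hp hh hcp hlast hEut hgcomp
      refine ⟨t, h1, ?_⟩
      -- FinCompat g (p ++ [t])
      intro j hj u' hu' t' ht'
      simp only [List.length_append, List.length_singleton] at hj
      rcases Nat.lt_or_ge (j+1) p.length with hlt | hge
      · rw [List.getElem?_append_left (by omega)] at hu'
        rw [List.getElem?_append_left hlt]
        exact hcp j hlt u' hu' t' ht'
      · have hj1 : j + 1 = p.length := by omega
        have hju : u' = u := by
          rw [List.getElem?_append_left (by omega),
            List.getElem?_eq_getElem (by omega : j < p.length)] at hu'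
          have hjn : j = n := by omega
          subst hjn
          exact (Option.some.inj hu').symm.trans hu.symm
        have : t' = t := hgcomp t' (by rw [← hju]; exact ht')
        rw [hj1, List.getElem?_concat_length, this]
    obtain ⟨u', hu'l, hu'V⟩ := (hsel (τ u) hτW).2.1 q hq hqh hqc hqmax
    have : u' = u := by
      rw [hql] at hu'l
      exact Option.some.inj hu'l.symm
    exact ⟨u, hlast, this ▸ hu'V⟩
  · -- infinite plays
    intro ρ h0 hEρ hcρ
    have hGoodn : ∀ n, ∃ σ' ∈ W, ρ n ∈ Vset σ' := by
      intro n
      induction n with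
      | zero => rw [h0]; exact ⟨σ, hσW, hσself σ hσW⟩
      | succ n ih =>
        exact ⟨τ (ρ n), (hτ _ ih).1,
          hstep _ _ ih (hEρ n) (fun t' ht' => (hcρ n t' ht').symm)⟩
    have hmono : ∀ n, τ (ρ (n+1)) ≤ τ (ρ n) := by
      intro n
      have h1 : ρ (n+1) ∈ Vset (τ (ρ n)) :=
        hstep _ _ (hGoodn n) (hEρ n) (fun t' ht' => (hcρ n t' ht').symm)
      exact (hτ _ (hGoodn (n+1))).2.2 (τ (ρ n)) (hτ _ (hGoodn n)).1 h1
    have hanti0 : ∀ m k, τ (ρ (m + k)) ≤ τ (ρ m) := by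
      intro m k
      induction k with
      | zero => exact le_refl _
      | succ k ih => exact le_trans (hmono (m + k)) ih
    have hanti : ∀ m n, m ≤ n → τ (ρ n) ≤ τ (ρ m) := by
      intro m n hmn
      have : n = m + (n - m) := by omega
      rw [this]
      exact hanti0 m (n - m)
    obtain ⟨σs, hσsmem, hσsmin⟩ := Set.exists_min_image
      (Set.range fun n => τ (ρ n)) id (Set.toFinite _) ⟨τ (ρ 0), 0, rfl⟩
    obtain ⟨N, hN⟩ := hσsmem
    have hconst : ∀ n, N ≤ n → τ (ρ n) = σs := by
      intro n hn
      refine le_antisymm (hN ▸ hanti N n hn) (hσsmin _ ⟨n, rfl⟩)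
    have hσsW : σs ∈ W := hN ▸ (hτ _ (hGoodn N)).1
    have hρN : ρ N ∈ Vset σs := hN ▸ (hτ _ (hGoodn N)).2.1
    -- g agrees with fsel σs from time N on
    have hagree : ∀ n, N ≤ n → g (ρ n) = fsel σs (ρ n) := by
      intro n hn
      rw [hg1 _ (hGoodn n), hconst n hn]
    rw [hVset σs hσsW] at hρN
    obtain ⟨p', hp', hh', hcp', hmem⟩ := hρN
    obtain ⟨q, hq, hqh, hqc, hql⟩ := UWSaux.exists_path_ending hp' hh' hcp' hmem
    have hqlen : 0 < q.length := List.length_pos_iff.mpr hq.1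
    set K := q.length - 1 with hK
    set ρ' : ℕ → V := fun n => if h : n < q.length then q[n] else ρ (N + n - K) with hρ'
    have hqK : q[K]'(by omega) = ρ N := by
      rw [List.getLast?_eq_getElem?, List.getElem?_eq_getElem (by omega : q.length - 1 < q.length)] at hql
      exact Option.some.inj hql
    have htail : ∀ j, ρ' (j + K) = ρ (N + j) := by
      intro j
      rcases Nat.eq_zero_or_pos j with hj | hj
      · subst hj
        simp only [hρ', Nat.zero_add]
        rw [dif_pos (by omega : K < q.length)]
        simpa using hqK
      · simp only [hρ']
        rw [dif_neg (by omega : ¬ j + K < q.length)]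
        congr 1
        omega
    have hρ'0 : ρ' 0 = σs := by
      simp only [hρ']
      rw [dif_pos hqlen]
      rw [List.head?_eq_getElem?, List.getElem?_eq_getElem hqlen] at hqh
      exact Option.some.inj hqh
    have hρ'E : ∀ n, E (ρ' n) (ρ' (n + 1)) := by
      intro n
      rcases Nat.lt_or_ge (n + 1) q.length with h | h
      · simp only [hρ']
        rw [dif_pos (by omega : n < q.length), dif_pos h]
        exact UWSaux.chain'_getElem hq.2 h
      · have hn : n ≥ K := by omega
        have e1 : ρ' n = ρ (N + (n - K)) := by
          rw [show n = (n - K) + K by omega]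
          rw [htail]
          congr 1; omega
        have e2 : ρ' (n + 1) = ρ (N + (n - K) + 1) := by
          rw [show n + 1 = (n + 1 - K) + K by omega]
          rw [htail]
          congr 1; omega
        rw [e1, e2]
        exact hEρ (N + (n - K))
    have hρ'c : ∀ n t, fsel σs (ρ' n) = some t → ρ' (n + 1) = t := by
      intro n t ht
      rcases Nat.lt_or_ge (n + 1) q.length with h | h
      · have e1 : ρ' n = q[n]'(by omega) := by
          simp only [hρ']; rw [dif_pos (by omega : n < q.length)]
        have e2 : ρ' (n + 1) = q[n+1]'h := by
          simp only [hρ']; rw [dif_pos h]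
        rw [e1] at ht
        have := hqc n h (q[n]'(by omega))
          (List.getElem?_eq_getElem (by omega : n < q.length)) t ht
        rw [List.getElem?_eq_getElem h] at this
        rw [e2]
        exact Option.some.inj this
      · have hn : n ≥ K := by omega
        have e1 : ρ' n = ρ (N + (n - K)) := by
          rw [show n = (n - K) + K by omega, htail]
          congr 1; omega
        have e2 : ρ' (n + 1) = ρ (N + (n - K) + 1) := by
          rw [show n + 1 = (n + 1 - K) + K by omega, htail]
          congr 1; omega
        rw [e1] at ht
        rw [e2]
        exact hcρ (N + (n - K)) t (by rw [hagree _ (by omega : N ≤ N + (n - K))]; exact ht)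
    have hwin : InfWinning c ρ' := (hsel σs hσsW).2.2 ρ' hρ'0 hρ'E hρ'c
    exact UWSaux.infWinning_congr (K := K) (L := N)
      (fun j => by rw [htail j]; congr 1; omega) hwin
end
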